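/- (Corollary 2, Backward Regression for subset selection.) Let Φ be a real n×m matrix with full column rank and let σ > 0 satisfy σ‖v‖₂ ≤ ‖Φv‖₂ for all v ∈ ℝ^m. Let y ∈ ℝ^n be arbitrary, let x* be a minimizer of ‖y − Φz‖₂ over all z ∈ ℝ^m with at most k nonzero entries, let S = supp(x*) (assume |S| = k ≥ 1), and let r = y − Φx*. If (σ/2)·min_{i∈S}|x*_i| > ‖r‖₂, then for every index set A with S ⊆ A ⊆ {1,…,m}, every i ∈ S and every j ∈ A \ S: (min over z with supp(z) ⊆ A \ {j} of ‖y − Φz‖₂) < (min over z with supp(z) ⊆ A \ {i} of ‖y − Φz‖₂); hence Backward Regression run for m − k steps returns the support S. -/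

import Mathlib

open Matrix

/-- The Euclidean (ℓ₂) norm of a finitely indexed real vector. -/
noncomputable def euclNorm {ι : Type*} [Fintype ι] (v : ι → ℝ) : ℝ :=
  ‖(WithLp.equiv 2 (ι → ℝ)).symm v‖

/-- The restricted least-squares residual norm: the infimum of `‖y − Φz‖₂` over
vectors `z` supported inside the index set `B`. -/
noncomputable def resNorm {n m : ℕ} (Φ : Matrix (Fin n) (Fin m) ℝ)
    (y : Fin n → ℝ) (B : Finset (Fin m)) : ℝ :=
  sInf {c : ℝ | ∃ z : Fin m → ℝ, (∀ l, z l ≠ 0 → l ∈ B) ∧ c = euclNorm (y - Φ.mulVec z)}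

/-- `z` has at most `k` nonzero entries. -/
def KSparse {m : ℕ} (k : ℕ) (z : Fin m → ℝ) : Prop :=
  ∃ T : Finset (Fin m), T.card ≤ k ∧ ∀ l, z l ≠ 0 → l ∈ T

lemma enorm_nonneg' {ι : Type*} [Fintype ι] (v : ι → ℝ) : 0 ≤ euclNorm v :=
  norm_nonneg _

lemma enorm_sub_le' {ι : Type*} [Fintype ι] (a b : ι → ℝ) :
    euclNorm (a - b) ≤ euclNorm a + euclNorm b := by
  have : (WithLp.equiv 2 (ι → ℝ)).symm (a - b)
      = (WithLp.equiv 2 (ι → ℝ)).symm a - (WithLp.equiv 2 (ι → ℝ)).symm b := rfl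
  unfold euclNorm
  rw [this]
  exact norm_sub_le _ _

lemma abs_le_enorm {ι : Type*} [Fintype ι] (v : ι → ℝ) (i : ι) :
    |v i| ≤ euclNorm v := by
  unfold euclNorm
  rw [EuclideanSpace.norm_eq]
  have h1 : |v i| = Real.sqrt (|v i| ^ 2) := by
    rw [Real.sqrt_sq_eq_abs, abs_abs]
  rw [h1]
  apply Real.sqrt_le_sqrt
  have : ((WithLp.equiv 2 (ι → ℝ)).symm v) i = v i := rfl
  calc |v i| ^ 2 = ‖((WithLp.equiv 2 (ι → ℝ)).symm v) i‖ ^ 2 := by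
        rw [this, Real.norm_eq_abs]
    _ ≤ ∑ j, ‖((WithLp.equiv 2 (ι → ℝ)).symm v) j‖ ^ 2 :=
        Finset.single_le_sum (f := fun j => ‖((WithLp.equiv 2 (ι → ℝ)).symm v) j‖ ^ 2)
          (fun j _ => by positivity) (Finset.mem_univ i)

/-- Corollary 2, Backward Regression for subset selection.
Let `xstar` solve the subset selection problem with sparsity `k`, with support `S`
of cardinality `k ≥ 1` and residual `r = y − Φ xstar`. If `(σ/2)·min_{i∈S}|xstar i| > ‖r‖₂`,
then for every active set `A ⊇ S`, every `i ∈ S` and `j ∈ A \ S`, deleting `j` yields a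
strictly smaller restricted residual than deleting `i`; hence Backward Regression run
for `m − k` steps returns `S`. -/
theorem backward_regression_subset_selection {n m : ℕ}
    (Φ : Matrix (Fin n) (Fin m) ℝ)
    (hΦ : Function.Injective Φ.mulVec)
    (σ : ℝ) (hσ : 0 < σ)
    (hlow : ∀ v : Fin m → ℝ, σ * euclNorm v ≤ euclNorm (Φ.mulVec v))
    (y : Fin n → ℝ) (k : ℕ) (hk : 1 ≤ k)
    (xstar : Fin m → ℝ)
    (hxstar_sparse : KSparse k xstar)
    (hxstar_min : ∀ z : Fin m → ℝ, KSparse k z →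
      euclNorm (y - Φ.mulVec xstar) ≤ euclNorm (y - Φ.mulVec z))
    (S : Finset (Fin m)) (hS : ∀ i, i ∈ S ↔ xstar i ≠ 0)
    (hScard : S.card = k) (hne : S.Nonempty)
    (r : Fin n → ℝ) (hr : r = y - Φ.mulVec xstar)
    (hnoise : σ / 2 * S.inf' hne (fun l => |xstar l|) > euclNorm r) :
    ∀ A : Finset (Fin m), S ⊆ A →
      ∀ i ∈ S, ∀ j ∈ A \ S,
        resNorm Φ y (A.erase j) < resNorm Φ y (A.erase i) := by
  intro A hSA i hi j hj
  set M : ℝ := S.inf' hne (fun l => |xstar l|) with hM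
  obtain ⟨hjA, hjS⟩ := Finset.mem_sdiff.mp hj
  -- upper bound for the j-side
  have hbdd : ∀ B : Finset (Fin m), BddBelow
      {c : ℝ | ∃ z : Fin m → ℝ, (∀ l, z l ≠ 0 → l ∈ B) ∧ c = euclNorm (y - Φ.mulVec z)} := by
    intro B
    refine ⟨0, ?_⟩
    rintro c ⟨z, _, rfl⟩
    exact enorm_nonneg' _
  have hj_le : resNorm Φ y (A.erase j) ≤ euclNorm r := by
    apply csInf_le (hbdd _)
    refine ⟨xstar, ?_, by rw [hr]⟩
    intro l hl
    have hlS : l ∈ S := (hS l).mpr hl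
    exact Finset.mem_erase.mpr ⟨fun h => hjS (h ▸ hlS), hSA hlS⟩
  -- lower bound for the i-side
  have hMi : M ≤ |xstar i| := Finset.inf'_le _ hi
  have hi_lb : σ * M - euclNorm r ≤ resNorm Φ y (A.erase i) := by
    apply le_csInf
    · exact ⟨euclNorm (y - Φ.mulVec 0), 0, fun l hl => absurd rfl hl, rfl⟩
    rintro c ⟨z, hz, rfl⟩
    have hzi : z i = 0 := by
      by_contra h
      exact (Finset.mem_erase.mp (hz i h)).1 rfl
    have h1 : |xstar i| ≤ euclNorm (xstar - z) := by
      have := abs_le_enorm (xstar - z) i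
      simpa [Pi.sub_apply, hzi] using this
    have h2 : σ * M ≤ euclNorm (Φ.mulVec (xstar - z)) := by
      calc σ * M ≤ σ * |xstar i| := by nlinarith
        _ ≤ σ * euclNorm (xstar - z) := by nlinarith
        _ ≤ euclNorm (Φ.mulVec (xstar - z)) := hlow _
    have h3 : Φ.mulVec (xstar - z) = (y - Φ.mulVec z) - r := by
      rw [hr, Matrix.mulVec_sub]
      abel
    have h4 : euclNorm ((y - Φ.mulVec z) - r) ≤ euclNorm (y - Φ.mulVec z) + euclNorm r :=
      enorm_sub_le' _ _
    rw [h3] at h2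
    linarith
  have hMr : σ * M > 2 * euclNorm r := by nlinarith
  calc resNorm Φ y (A.erase j) ≤ euclNorm r := hj_le
    _ < σ * M - euclNorm r := by linarith
    _ ≤ resNorm Φ y (A.erase i) := hi_lb
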